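/- Let R be a discrete valuation ring with uniformizer π, let 0 → L →^A L^r → Y → 0 be a short exact sequence of R-modules with L finite free, A an injective R-linear map, and let m be a positive integer larger than all valuations of the invariant factors of A. Then ker(L/π^m L →^A (L/π^m L)^r) is isomorphic to Y[π^m], the π^m-torsion submodule of Y, and both are isomorphic to ⊕ᵢ R/(π^{mᵢ}) where π^{mᵢ} are the invariant factors of A. -/

import Mathlib

section Aux

variable {R : Type*} [CommRing R] {M : Type*} [AddCommGroup M] [Module R M]

lemma aux_span_smul_top (a : R) :
    (Ideal.span {a} • (⊤ : Submodule R M)) =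
      LinearMap.range (a • (LinearMap.id : M →ₗ[R] M)) := by
  apply le_antisymm
  · refine Submodule.smul_le.mpr fun c hc x _ => ?_
    obtain ⟨t, rfl⟩ := Ideal.mem_span_singleton'.mp hc
    exact ⟨t • x, by simp [mul_smul, smul_comm a t x, mul_comm]⟩
  · rintro x ⟨y, rfl⟩
    simpa using Submodule.smul_mem_smul (Ideal.mem_span_singleton_self a)
      (Submodule.mem_top (x := y))

lemma aux_mem_span_smul_top (a : R) (x : M) :
    x ∈ Ideal.span {a} • (⊤ : Submodule R M) ↔ ∃ y, a • y = x := by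
  rw [aux_span_smul_top]
  constructor
  · rintro ⟨y, rfl⟩; exact ⟨y, by simp⟩
  · rintro ⟨y, rfl⟩; exact ⟨y, by simp⟩

/-- transport of torsion submodules along a linear equivalence -/
noncomputable def auxTorsionEquiv {N : Type*} [AddCommGroup N] [Module R N]
    (e : M ≃ₗ[R] N) (a : R) :
    (Submodule.torsionBy R M a) ≃ₗ[R] (Submodule.torsionBy R N a) := by
  refine (e.submoduleMap (Submodule.torsionBy R M a)).trans (LinearEquiv.ofEq _ _ ?_)
  ext x
  simp only [Submodule.mem_map, Submodule.mem_torsionBy_iff]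
  constructor
  · rintro ⟨y, hy, rfl⟩
    rw [← map_smul, hy, map_zero]
  · intro hx
    refine ⟨e.symm x, ?_, by simp⟩
    have : a • e.symm x = e.symm (a • x) := (map_smul e.symm a x).symm
    rw [this, hx, map_zero]

end Aux

set_option maxHeartbeats 1000000 in
theorem ker_mod_pim_eq_torsion
    (R : Type*) [CommRing R] [IsDomain R] [IsDiscreteValuationRing R]
    (π : R) (hπ : Irreducible π)
    (n r : ℕ) (A : (Fin n → R) →ₗ[R] (Fin r → Fin n → R))
    (hA : Function.Injective A)
    (k s : ℕ) (mi : Fin k → ℕ)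
    (hY : Nonempty
      (((Fin r → Fin n → R) ⧸ LinearMap.range A) ≃ₗ[R]
        (((i : Fin k) → R ⧸ Ideal.span {π ^ mi i}) × (Fin s → R))))
    (m : ℕ) (hm : ∀ i, mi i < m) :
    Nonempty
        ((LinearMap.ker
            (Submodule.mapQ
              ((Ideal.span {π ^ m}) • (⊤ : Submodule R (Fin n → R)))
              ((Ideal.span {π ^ m}) • (⊤ : Submodule R (Fin r → Fin n → R)))
              A
              (by
                rw [← Submodule.map_le_iff_le_comap, Submodule.map_smul'']
                exact smul_mono_right _ le_top))) ≃ₗ[R]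
          (Submodule.torsionBy R ((Fin r → Fin n → R) ⧸ LinearMap.range A) (π ^ m))) ∧
      Nonempty
        ((LinearMap.ker
            (Submodule.mapQ
              ((Ideal.span {π ^ m}) • (⊤ : Submodule R (Fin n → R)))
              ((Ideal.span {π ^ m}) • (⊤ : Submodule R (Fin r → Fin n → R)))
              A
              (by
                rw [← Submodule.map_le_iff_le_comap, Submodule.map_smul'']
                exact smul_mono_right _ le_top))) ≃ₗ[R]
          ((i : Fin k) → R ⧸ Ideal.span {π ^ mi i})) := by
  classical
  set M : Type _ := Fin n → R with hM
  set N : Type _ := Fin r → Fin n → R with hN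
  set a : R := π ^ m with ha'
  have ha : a ≠ 0 := pow_ne_zero _ hπ.ne_zero
  set p : Submodule R M := Ideal.span {a} • ⊤ with hp
  set q : Submodule R N := Ideal.span {a} • ⊤ with hq
  have hpq : p ≤ Submodule.comap A q := by
    rw [hp, hq, ← Submodule.map_le_iff_le_comap, Submodule.map_smul'']
    exact smul_mono_right _ le_top
  set Y := N ⧸ LinearMap.range A with hYdef
  set S : Submodule R M := Submodule.comap A q with hS
  -- regularity of a on N
  have hreg : ∀ u v : N, a • u = a • v → u = v := by
    intro u v huv
    have := sub_eq_zero.mpr huv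
    rw [← smul_sub] at this
    rcases smul_eq_zero.mp this with h | h
    · exact absurd h ha
    · exact sub_eq_zero.mp h
  -- choice of "division by a" on S
  have hex : ∀ x : S, ∃ u : N, a • u = A (x : M) :=
    fun x => (aux_mem_span_smul_top a _).mp x.2
  choose u hu using hex
  have hu_add : ∀ x y : S, u (x + y) = u x + u y := by
    intro x y
    refine hreg _ _ ?_
    rw [hu, smul_add, hu, hu, ← map_add]
    rfl
  have hu_smul : ∀ (c : R) (x : S), u (c • x) = c • u x := by
    intro c x
    refine hreg _ _ ?_
    rw [hu, smul_comm a c, hu, ← map_smul]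
    rfl
  let ψ₀ : S →ₗ[R] N :=
    { toFun := u, map_add' := hu_add, map_smul' := hu_smul }
  let ψ : S →ₗ[R] Y := (LinearMap.range A).mkQ.comp ψ₀
  let g : S →ₗ[R] (M ⧸ p) := p.mkQ.comp S.subtype
  have hkerg : LinearMap.ker g = Submodule.comap S.subtype p := by
    rw [LinearMap.ker_comp, Submodule.ker_mkQ]
  have hkerψ : LinearMap.ker ψ = Submodule.comap S.subtype p := by
    ext x
    rw [LinearMap.mem_ker, Submodule.mem_comap, Submodule.subtype_apply]
    have hψx : ψ x = Submodule.Quotient.mk (u x) := rfl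
    rw [hψx, Submodule.Quotient.mk_eq_zero, LinearMap.mem_range]
    constructor
    · rintro ⟨z, hz⟩
      have : A (a • z) = A (x : M) := by
        rw [map_smul, hz]; exact hu x
      have hx : a • z = (x : M) := hA this
      rw [hp]
      exact (aux_mem_span_smul_top a _).mpr ⟨z, hx⟩
    · intro hx
      obtain ⟨z, hz⟩ := (aux_mem_span_smul_top a _).mp hx
      refine ⟨z, hreg _ _ ?_⟩
      rw [hu, ← hz, map_smul]
  have hrangeψ : LinearMap.range ψ = Submodule.torsionBy R Y a := by
    ext y
    rw [LinearMap.mem_range, Submodule.mem_torsionBy_iff]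
    constructor
    · rintro ⟨x, hx⟩
      rw [← hx]
      have hψx : ψ x = Submodule.Quotient.mk (u x) := rfl
      rw [hψx, ← Submodule.Quotient.mk_smul, hu, Submodule.Quotient.mk_eq_zero]
      exact ⟨(x : M), rfl⟩
    · intro hy
      obtain ⟨v, rfl⟩ := Submodule.mkQ_surjective _ y
      rw [Submodule.mkQ_apply, ← Submodule.Quotient.mk_smul,
        Submodule.Quotient.mk_eq_zero] at hy
      obtain ⟨x, hx⟩ := (LinearMap.mem_range.mp hy)
      have hxS : x ∈ S := by
        rw [hS, Submodule.mem_comap, hq]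
        exact (aux_mem_span_smul_top a _).mpr ⟨v, hx.symm⟩
      refine ⟨⟨x, hxS⟩, ?_⟩
      have huv : u ⟨x, hxS⟩ = v := hreg _ _ (by rw [hu, hx])
      have hψx : ψ ⟨x, hxS⟩ = Submodule.Quotient.mk (u ⟨x, hxS⟩) := rfl
      rw [hψx, huv, Submodule.mkQ_apply]
  -- identify range g with the kernel of mapQ
  have hrangeg : LinearMap.range g = LinearMap.ker (Submodule.mapQ p q A hpq) := by
    ext xq
    obtain ⟨x, rfl⟩ := Submodule.mkQ_surjective p xq
    simp only [LinearMap.mem_range, LinearMap.mem_ker, Submodule.mkQ_apply,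
      Submodule.mapQ_apply, Submodule.Quotient.mk_eq_zero]
    constructor
    · rintro ⟨⟨y, hy⟩, hxy⟩
      have hsub : y - x ∈ p := (Submodule.Quotient.eq p).mp hxy
      have h1 : A (y - x) ∈ q := hpq hsub
      have h2 : A y ∈ q := hy
      have : A x = A y - A (y - x) := by rw [map_sub]; ring
      rw [this]
      exact sub_mem h2 h1
    · intro hx
      exact ⟨⟨x, hx⟩, rfl⟩
  -- the main equivalence with the torsion submodule
  have eKT : (LinearMap.ker (Submodule.mapQ p q A hpq)) ≃ₗ[R]
      (Submodule.torsionBy R Y a) :=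
    (LinearEquiv.ofEq _ _ hrangeg.symm).trans <|
      (LinearMap.quotKerEquivRange g).symm.trans <|
      (Submodule.quotEquivOfEq _ _ (hkerg.trans hkerψ.symm)).trans <|
      (LinearMap.quotKerEquivRange ψ).trans (LinearEquiv.ofEq _ _ hrangeψ)
  -- part 2 : torsion ≃ product
  obtain ⟨e⟩ := hY
  set P : Type _ := (i : Fin k) → R ⧸ Ideal.span {π ^ mi i} with hP
  set F : Type _ := Fin s → R with hF
  have hPtor : ∀ x : P, a • x = 0 := by
    intro x
    funext i
    obtain ⟨c, hc⟩ := Submodule.mkQ_surjective _ (x i)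
    show a • x i = 0
    rw [← hc, Submodule.mkQ_apply, ← Submodule.Quotient.mk_smul,
      Submodule.Quotient.mk_eq_zero, smul_eq_mul]
    refine Ideal.mul_mem_right c _ (Ideal.mem_span_singleton.mpr ⟨π ^ (m - mi i), ?_⟩)
    rw [ha', ← pow_add]
    have := hm i
    congr 1
    omega
  have eTP : (Submodule.torsionBy R (P × F) a) ≃ₗ[R] P := by
    refine LinearEquiv.ofBijective
      ((LinearMap.fst R P F).comp (Submodule.torsionBy R (P × F) a).subtype) ⟨?_, ?_⟩
    · rintro ⟨⟨x1, x2⟩, hx⟩ ⟨⟨y1, y2⟩, hy⟩ hxy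
      rw [Submodule.mem_torsionBy_iff, Prod.smul_mk, Prod.mk_eq_zero] at hx hy
      have hx2 : x2 = 0 := by
        rcases smul_eq_zero.mp hx.2 with h | h
        · exact absurd h ha
        · exact h
      have hy2 : y2 = 0 := by
        rcases smul_eq_zero.mp hy.2 with h | h
        · exact absurd h ha
        · exact h
      have h1 : x1 = y1 := hxy
      exact Subtype.ext (by simp [Prod.ext_iff, h1, hx2, hy2])
    · intro x
      refine ⟨⟨(x, 0), ?_⟩, rfl⟩
      rw [Submodule.mem_torsionBy_iff, Prod.smul_mk, Prod.mk_eq_zero]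
      exact ⟨hPtor x, smul_zero a⟩
  have eYP : (Submodule.torsionBy R Y a) ≃ₗ[R] P :=
    (auxTorsionEquiv e a).trans eTP
  exact ⟨⟨eKT⟩, ⟨eKT.trans eYP⟩⟩
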